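/- Let $M=(E,r)$ be a connected polymatroid and $A \subseteq E$ with $\lambda(A) < 2\min\{\lambda(X) : \emptyset \neq X \subsetneq E\}$. Then $M\backslash A$ or $M/A$ is connected. -/

import Mathlib

/-- Connectivity of a polymatroid with rank function `r` and ground set `F`. -/
def Conn {α : Type*} [DecidableEq α] (r : Finset α → ℤ) (F : Finset α) : Prop :=
  ∀ X ⊆ F, X ≠ ∅ → X ≠ F → r X + r (F \ X) ≠ r F

set_option maxHeartbeats 2000000 in
/-- If λ(A) is less than twice the minimum of λ over nonempty proper subsets,
then M\A or M/A is connected. -/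
theorem delete_or_contract_conn {α : Type*} [DecidableEq α]
    (E : Finset α) (r : Finset α → ℤ)
    (hr0 : r ∅ = 0)
    (hmono : ∀ X Y : Finset α, X ⊆ Y → r X ≤ r Y)
    (hsub : ∀ X Y : Finset α, r (X ∪ Y) + r (X ∩ Y) ≤ r X + r Y)
    (hconn : Conn r E)
    (A : Finset α) (hA : A ⊆ E)
    (hsmall : ∀ X ⊆ E, X ≠ ∅ → X ≠ E →
      r A + r (E \ A) - r E < 2 * (r X + r (E \ X) - r E)) :
    Conn r (E \ A) ∨ Conn (fun X => r (X ∪ A) - r A) (E \ A) := by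
  by_contra hcon
  push_neg at hcon
  obtain ⟨hdel, hctr⟩ := hcon
  unfold Conn at hdel hctr
  push_neg at hdel hctr
  obtain ⟨X, hXsub, hXne, hXnW, hXeq⟩ := hdel
  obtain ⟨Y, hYsub, hYne, hYnW, hYeq⟩ := hctr
  set W := E \ A with hWdef
  set Xc := W \ X with hXcdef
  set Yc := W \ Y with hYcdef
  set P := X ∩ Y with hPdef
  set Q := X \ Y with hQdef
  set R := Y \ X with hRdef
  set S := W \ (X ∪ Y) with hSdef
  have hWE : W ⊆ E := by rw [hWdef]; exact Finset.sdiff_subset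
  have hWA : W ∪ A = E := by rw [hWdef]; exact Finset.sdiff_union_of_subset hA
  have hXE : ∀ a, a ∈ X → a ∈ E ∧ a ∉ A := by
    intro a h
    have h' := hXsub h
    rw [hWdef] at h'
    exact Finset.mem_sdiff.mp h'
  have hYE : ∀ a, a ∈ Y → a ∈ E ∧ a ∉ A := by
    intro a h
    have h' := hYsub h
    rw [hWdef] at h'
    exact Finset.mem_sdiff.mp h'
  -- basic rank equalities from the two separations
  have e1 : r X + r Xc = r W := hXeq
  have e2 : r (Y ∪ A) + r (Yc ∪ A) = r E + r A := by
    simp only [hWA] at hYeq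
    linarith
  -- set identities
  have i1 : E \ X = Xc ∪ A := by
    ext a
    have h1 := hXE a; have h2 := hYE a; have h3 : a ∈ A → a ∈ E := fun h => hA h
    simp only [hXcdef, hWdef, Finset.mem_union, Finset.mem_sdiff]
    clear_value W Xc Yc P Q R S
    clear * - h1 h2 h3
    tauto
  have i2 : E \ Xc = X ∪ A := by
    ext a
    have h1 := hXE a; have h2 := hYE a; have h3 : a ∈ A → a ∈ E := fun h => hA h
    simp only [hXcdef, hWdef, Finset.mem_union, Finset.mem_sdiff]
    clear_value W Xc Yc P Q R S
    clear * - h1 h2 h3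
    tauto
  have i3 : E \ Y = Yc ∪ A := by
    ext a
    have h1 := hXE a; have h2 := hYE a; have h3 : a ∈ A → a ∈ E := fun h => hA h
    simp only [hYcdef, hWdef, Finset.mem_union, Finset.mem_sdiff]
    clear_value W Xc Yc P Q R S
    clear * - h1 h2 h3
    tauto
  have i4 : E \ Yc = Y ∪ A := by
    ext a
    have h1 := hXE a; have h2 := hYE a; have h3 : a ∈ A → a ∈ E := fun h => hA h
    simp only [hYcdef, hWdef, Finset.mem_union, Finset.mem_sdiff]
    clear_value W Xc Yc P Q R S
    clear * - h1 h2 h3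
    tauto
  have i5 : E \ P = Q ∪ Xc ∪ A := by
    ext a
    have h1 := hXE a; have h2 := hYE a; have h3 : a ∈ A → a ∈ E := fun h => hA h
    simp only [hPdef, hQdef, hXcdef, hWdef, Finset.mem_union, Finset.mem_inter,
      Finset.mem_sdiff]
    clear_value W Xc Yc P Q R S
    clear * - h1 h2 h3
    tauto
  have i6 : E \ Q = P ∪ Xc ∪ A := by
    ext a
    have h1 := hXE a; have h2 := hYE a; have h3 : a ∈ A → a ∈ E := fun h => hA h
    simp only [hPdef, hQdef, hXcdef, hWdef, Finset.mem_union, Finset.mem_inter,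
      Finset.mem_sdiff]
    clear_value W Xc Yc P Q R S
    clear * - h1 h2 h3
    tauto
  have i7 : E \ R = S ∪ X ∪ A := by
    ext a
    have h1 := hXE a; have h2 := hYE a; have h3 : a ∈ A → a ∈ E := fun h => hA h
    simp only [hRdef, hSdef, hWdef, Finset.mem_union, Finset.mem_sdiff]
    clear_value W Xc Yc P Q R S
    clear * - h1 h2 h3
    tauto
  have i8 : E \ S = R ∪ X ∪ A := by
    ext a
    have h1 := hXE a; have h2 := hYE a; have h3 : a ∈ A → a ∈ E := fun h => hA h
    simp only [hRdef, hSdef, hWdef, Finset.mem_union, Finset.mem_sdiff]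
    clear_value W Xc Yc P Q R S
    clear * - h1 h2 h3
    tauto
  have j1 : (Yc ∪ A) ∪ Xc = Q ∪ Xc ∪ A := by
    ext a
    have h1 := hXE a; have h2 := hYE a; have h3 : a ∈ A → a ∈ E := fun h => hA h
    simp only [hQdef, hXcdef, hYcdef, hWdef, Finset.mem_union, Finset.mem_sdiff]
    clear_value W Xc Yc P Q R S
    clear * - h1 h2 h3
    tauto
  have j2 : (Yc ∪ A) ∩ Xc = S := by
    ext a
    have h1 := hXE a; have h2 := hYE a; have h3 : a ∈ A → a ∈ E := fun h => hA h
    simp only [hSdef, hXcdef, hYcdef, hWdef, Finset.mem_union, Finset.mem_inter,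
      Finset.mem_sdiff]
    clear_value W Xc Yc P Q R S
    clear * - h1 h2 h3
    tauto
  have j3 : (Y ∪ A) ∪ Xc = P ∪ Xc ∪ A := by
    ext a
    have h1 := hXE a; have h2 := hYE a; have h3 : a ∈ A → a ∈ E := fun h => hA h
    simp only [hPdef, hXcdef, hWdef, Finset.mem_union, Finset.mem_inter,
      Finset.mem_sdiff]
    clear_value W Xc Yc P Q R S
    clear * - h1 h2 h3
    tauto
  have j4 : (Y ∪ A) ∩ Xc = R := by
    ext a
    have h1 := hXE a; have h2 := hYE a; have h3 : a ∈ A → a ∈ E := fun h => hA h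
    simp only [hRdef, hXcdef, hWdef, Finset.mem_union, Finset.mem_inter,
      Finset.mem_sdiff]
    clear_value W Xc Yc P Q R S
    clear * - h1 h2 h3
    tauto
  have j5 : (Yc ∪ A) ∪ X = S ∪ X ∪ A := by
    ext a
    have h1 := hXE a; have h2 := hYE a; have h3 : a ∈ A → a ∈ E := fun h => hA h
    simp only [hSdef, hYcdef, hWdef, Finset.mem_union, Finset.mem_sdiff]
    clear_value W Xc Yc P Q R S
    clear * - h1 h2 h3
    tauto
  have j6 : (Yc ∪ A) ∩ X = Q := by
    ext a
    have h1 := hXE a; have h2 := hYE a; have h3 : a ∈ A → a ∈ E := fun h => hA h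
    simp only [hQdef, hYcdef, hWdef, Finset.mem_union, Finset.mem_inter,
      Finset.mem_sdiff]
    clear_value W Xc Yc P Q R S
    clear * - h1 h2 h3
    tauto
  have j7 : (Y ∪ A) ∪ X = R ∪ X ∪ A := by
    ext a
    have h1 := hXE a; have h2 := hYE a; have h3 : a ∈ A → a ∈ E := fun h => hA h
    simp only [hRdef, hWdef, Finset.mem_union, Finset.mem_sdiff]
    clear_value W Xc Yc P Q R S
    clear * - h1 h2 h3
    tauto
  have j8 : (Y ∪ A) ∩ X = P := by
    ext a
    have h1 := hXE a; have h2 := hYE a; have h3 : a ∈ A → a ∈ E := fun h => hA h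
    simp only [hPdef, Finset.mem_union, Finset.mem_inter]
    clear_value W Xc Yc P Q R S
    clear * - h1 h2 h3
    tauto
  have k1 : P ∪ R = Y := by
    ext a
    have h1 := hXE a; have h2 := hYE a; have h3 : a ∈ A → a ∈ E := fun h => hA h
    simp only [hPdef, hRdef, Finset.mem_union, Finset.mem_inter, Finset.mem_sdiff]
    clear_value W Xc Yc P Q R S
    clear * - h1 h2 h3
    tauto
  have k2 : P ∩ R = ∅ := by
    ext a
    simp only [hPdef, hRdef, Finset.mem_inter, Finset.mem_sdiff,
      Finset.notMem_empty, iff_false]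
    clear_value W Xc Yc P Q R S
    clear * -
    tauto
  have k3 : Q ∪ S = Yc := by
    ext a
    have h1 := hXE a; have h2 := hYE a; have h3 : a ∈ A → a ∈ E := fun h => hA h
    simp only [hQdef, hSdef, hYcdef, hWdef, Finset.mem_union, Finset.mem_sdiff]
    clear_value W Xc Yc P Q R S
    clear * - h1 h2 h3
    tauto
  have k4 : Q ∩ S = ∅ := by
    ext a
    simp only [hQdef, hSdef, hWdef, Finset.mem_inter, Finset.mem_sdiff,
      Finset.mem_union, Finset.notMem_empty, iff_false]
    clear_value W Xc Yc P Q R S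
    clear * -
    tauto
  -- submodularity instances
  have s_P : r (Q ∪ Xc ∪ A) + r S ≤ r (Yc ∪ A) + r Xc := by
    have h := hsub (Yc ∪ A) Xc
    rw [j1, j2] at h
    exact h
  have s_Q : r (P ∪ Xc ∪ A) + r R ≤ r (Y ∪ A) + r Xc := by
    have h := hsub (Y ∪ A) Xc
    rw [j3, j4] at h
    exact h
  have s_R : r (S ∪ X ∪ A) + r Q ≤ r (Yc ∪ A) + r X := by
    have h := hsub (Yc ∪ A) X
    rw [j5, j6] at h
    exact h
  have s_S : r (R ∪ X ∪ A) + r P ≤ r (Y ∪ A) + r X := by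
    have h := hsub (Y ∪ A) X
    rw [j7, j8] at h
    exact h
  have s_Y : r Y + r (∅ : Finset α) ≤ r P + r R := by
    have h := hsub P R
    rw [k1, k2] at h
    exact h
  have s_Yc : r Yc + r (∅ : Finset α) ≤ r Q + r S := by
    have h := hsub Q S
    rw [k3, k4] at h
    exact h
  -- nonemptiness and properness witnesses
  have neE : ∀ (Z : Finset α) (a : α), a ∈ E → a ∉ Z → Z ≠ E := by
    intro Z a haE haZ h
    rw [h] at haZ
    exact haZ haE
  obtain ⟨x0, hx0⟩ := Finset.nonempty_iff_ne_empty.mpr hXne.ne_empty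
  obtain ⟨y0, hy0⟩ := Finset.nonempty_iff_ne_empty.mpr hYne.ne_empty
  have hXcne : Xc ≠ ∅ := by
    rw [hXcdef]
    intro h
    exact hXnW (Finset.Subset.antisymm hXsub (Finset.sdiff_eq_empty_iff_subset.mp h))
  have hYcne : Yc ≠ ∅ := by
    rw [hYcdef]
    intro h
    exact hYnW (Finset.Subset.antisymm hYsub (Finset.sdiff_eq_empty_iff_subset.mp h))
  obtain ⟨x1, hx1⟩ := Finset.nonempty_iff_ne_empty.mpr hXcne
  obtain ⟨y1, hy1⟩ := Finset.nonempty_iff_ne_empty.mpr hYcne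
  have hx1' : x1 ∈ W ∧ x1 ∉ X := by
    have h := hx1
    rw [hXcdef] at h
    exact Finset.mem_sdiff.mp h
  have hy1' : y1 ∈ W ∧ y1 ∉ Y := by
    have h := hy1
    rw [hYcdef] at h
    exact Finset.mem_sdiff.mp h
  have hx0E : x0 ∈ E := (hXE x0 hx0).1
  have hy0E : y0 ∈ E := (hYE y0 hy0).1
  have hx1E : x1 ∈ E := hWE hx1'.1
  have hy1E : y1 ∈ E := hWE hy1'.1
  have hx0nXc : x0 ∉ Xc := by
    intro h
    rw [hXcdef] at h
    exact (Finset.mem_sdiff.mp h).2 hx0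
  have hy0nYc : y0 ∉ Yc := by
    intro h
    rw [hYcdef] at h
    exact (Finset.mem_sdiff.mp h).2 hy0
  have hx1nP : x1 ∉ P := by
    intro h
    rw [hPdef] at h
    exact hx1'.2 (Finset.mem_inter.mp h).1
  have hx1nQ : x1 ∉ Q := by
    intro h
    rw [hQdef] at h
    exact hx1'.2 (Finset.mem_sdiff.mp h).1
  have hx0nR : x0 ∉ R := by
    intro h
    rw [hRdef] at h
    exact (Finset.mem_sdiff.mp h).2 hx0
  have hx0nS : x0 ∉ S := by
    intro h
    rw [hSdef] at h
    exact (Finset.mem_sdiff.mp h).2 (Finset.mem_union_left _ hx0)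
  -- subset facts
  have hXsubE : X ⊆ E := hXsub.trans hWE
  have hYsubE : Y ⊆ E := hYsub.trans hWE
  have hXcsubE : Xc ⊆ E := by
    rw [hXcdef]
    exact Finset.sdiff_subset.trans hWE
  have hYcsubE : Yc ⊆ E := by
    rw [hYcdef]
    exact Finset.sdiff_subset.trans hWE
  have hPsubE : P ⊆ E := by
    rw [hPdef]
    exact Finset.inter_subset_left.trans hXsubE
  have hQsubE : Q ⊆ E := by
    rw [hQdef]
    exact Finset.sdiff_subset.trans hXsubE
  have hRsubE : R ⊆ E := by
    rw [hRdef]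
    exact Finset.sdiff_subset.trans hYsubE
  have hSsubE : S ⊆ E := by
    rw [hSdef]
    exact Finset.sdiff_subset.trans hWE
  -- hsmall instances
  have hsX : r A + r W - r E < 2 * (r X + r (Xc ∪ A) - r E) := by
    have h := hsmall X hXsubE hXne.ne_empty (neE X x1 hx1E hx1'.2)
    rw [i1] at h
    exact h
  have hsXc : r A + r W - r E < 2 * (r Xc + r (X ∪ A) - r E) := by
    have h := hsmall Xc hXcsubE hXcne (neE Xc x0 hx0E hx0nXc)
    rw [i2] at h
    exact h
  have hsY : r A + r W - r E < 2 * (r Y + r (Yc ∪ A) - r E) := by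
    have h := hsmall Y hYsubE hYne.ne_empty (neE Y y1 hy1E hy1'.2)
    rw [i3] at h
    exact h
  have hsYc : r A + r W - r E < 2 * (r Yc + r (Y ∪ A) - r E) := by
    have h := hsmall Yc hYcsubE hYcne (neE Yc y0 hy0E hy0nYc)
    rw [i4] at h
    exact h
  -- case analysis on the corners
  by_cases hPe : P = ∅
  · have hrP : r P = 0 := by rw [hPe, hr0]
    have hre : r (P ∪ Xc ∪ A) = r (Xc ∪ A) := by rw [hPe, Finset.empty_union]
    linarith [s_Q, s_Y, hsX, hsY, e1, e2, hr0, hrP, hre]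
  by_cases hQe : Q = ∅
  · have hrQ : r Q = 0 := by rw [hQe, hr0]
    have hre : r (Q ∪ Xc ∪ A) = r (Xc ∪ A) := by rw [hQe, Finset.empty_union]
    linarith [s_P, s_Yc, hsX, hsYc, e1, e2, hr0, hrQ, hre]
  by_cases hRe : R = ∅
  · have hrR : r R = 0 := by rw [hRe, hr0]
    have hre : r (R ∪ X ∪ A) = r (X ∪ A) := by rw [hRe, Finset.empty_union]
    linarith [s_S, s_Y, hsXc, hsY, e1, e2, hr0, hrR, hre]
  by_cases hSe : S = ∅
  · have hrS : r S = 0 := by rw [hSe, hr0]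
    have hre : r (S ∪ X ∪ A) = r (X ∪ A) := by rw [hSe, Finset.empty_union]
    linarith [s_R, s_Yc, hsXc, hsYc, e1, e2, hr0, hrS, hre]
  · have hsP : r A + r W - r E < 2 * (r P + r (Q ∪ Xc ∪ A) - r E) := by
      have h := hsmall P hPsubE hPe (neE P x1 hx1E hx1nP)
      rw [i5] at h
      exact h
    have hsQ : r A + r W - r E < 2 * (r Q + r (P ∪ Xc ∪ A) - r E) := by
      have h := hsmall Q hQsubE hQe (neE Q x1 hx1E hx1nQ)
      rw [i6] at h
      exact h
    have hsR : r A + r W - r E < 2 * (r R + r (S ∪ X ∪ A) - r E) := by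
      have h := hsmall R hRsubE hRe (neE R x0 hx0E hx0nR)
      rw [i7] at h
      exact h
    have hsS : r A + r W - r E < 2 * (r S + r (R ∪ X ∪ A) - r E) := by
      have h := hsmall S hSsubE hSe (neE S x0 hx0E hx0nS)
      rw [i8] at h
      exact h
    linarith [s_P, s_Q, s_R, s_S, hsP, hsQ, hsR, hsS, e1, e2]
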